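/- arXiv:2007.01417 — 3 statements merged into one kernel-verified Lean document; each statement's English description precedes it below -/
import Mathlib

section
/- Let n = a + s and m = b + t. Suppose U is a 2^n × 2^n complex unitary matrix that is an (α, a, ε₁)-block-encoding of a 2^s × 2^s complex matrix A, and V is a 2^m × 2^m complex unitary matrix that is a (β, b, ε₂)-block-encoding of a 2^t × 2^t complex matrix B. Then there exists a permutation matrix S of size 2^{n+m} × 2^{n+m}, depending only on the dimensions a, s, b, t (and not on U or V), such that S (U ⊗ V) S† is an (αβ, a + b, αε₂ + βε₁ + ε₁ε₂)-block-encoding of A ⊗ B, where ⊗ denotes the Kronecker product. -/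
open scoped Kronecker
open Matrix

noncomputable def specNorm {n : Type*} [Fintype n] [DecidableEq n] (A : Matrix n n ℂ) : ℝ :=
  ‖Matrix.toEuclideanCLM (𝕜 := ℂ) A‖

def IsPermMatrix {n : Type*} [Fintype n] [DecidableEq n] (S : Matrix n n ℂ) : Prop :=
  ∃ e : Equiv.Perm n, S = e.permMatrix ℂ

noncomputable def kron {N M : ℕ} (A : Matrix (Fin N) (Fin N) ℂ) (B : Matrix (Fin M) (Fin M) ℂ) :
    Matrix (Fin (N * M)) (Fin (N * M)) ℂ :=
  Matrix.reindex finProdFinEquiv finProdFinEquiv (A ⊗ₖ B)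

def castSq {N M : ℕ} (h : N = M) (A : Matrix (Fin N) (Fin N) ℂ) : Matrix (Fin M) (Fin M) ℂ :=
  Matrix.reindex (finCongr h) (finCongr h) A

def leadBlock {N M : ℕ} (h : M ≤ N) (U : Matrix (Fin N) (Fin N) ℂ) :
    Matrix (Fin M) (Fin M) ℂ :=
  Matrix.of fun i j => U (Fin.castLE h i) (Fin.castLE h j)

theorem twoPowLe (a s : ℕ) : 2 ^ s ≤ 2 ^ (a + s) :=
  Nat.pow_le_pow_right (by norm_num) (Nat.le_add_left s a)

def IsBlockEncoding (a s : ℕ) (α ε : ℝ)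
    (U : Matrix (Fin (2 ^ (a + s))) (Fin (2 ^ (a + s))) ℂ)
    (A : Matrix (Fin (2 ^ s)) (Fin (2 ^ s)) ℂ) : Prop :=
  U ∈ Matrix.unitaryGroup (Fin (2 ^ (a + s))) ℂ ∧
    specNorm (A - (α : ℂ) • leadBlock (twoPowLe a s) U) ≤ ε

/-! ### Auxiliary lemmas -/

open scoped Matrix.Norms.L2Operator

section Aux

set_option linter.unusedSectionVars false

variable {m n l : Type*} [Fintype m] [Fintype n] [Fintype l]
  [DecidableEq m] [DecidableEq n] [DecidableEq l]

lemma specNorm_eq (A : Matrix n n ℂ) : specNorm A = ‖A‖ := rfl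

lemma matNormOne [Nonempty n] : ‖(1 : Matrix n n ℂ)‖ = 1 := by
  rw [Matrix.cstar_norm_def, _root_.map_one]
  exact norm_one

/-- Rectangular "inclusion" matrix of an injection. -/
def inclMat (f : n → m) : Matrix m n ℂ := Matrix.of fun i j => if i = f j then 1 else 0

lemma inclMat_conjT_mul (f : n → m) (hf : Function.Injective f) :
    (inclMat (m := m) f)ᴴ * inclMat f = 1 := by
  ext j k
  simp only [Matrix.mul_apply, Matrix.conjTranspose_apply, inclMat, Matrix.of_apply]
  by_cases h : j = k
  · subst h
    rw [Finset.sum_eq_single (f j)] <;> simp +contextual [Matrix.one_apply]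
  · rw [Matrix.one_apply_ne h, Finset.sum_eq_zero]
    intro i _
    by_cases h1 : i = f j <;> by_cases h2 : i = f k <;> simp_all [hf.eq_iff]

lemma sandwich (f : n → m) (A : Matrix m m ℂ) :
    (inclMat (m := m) f)ᴴ * A * inclMat f = Matrix.of fun i j => A (f i) (f j) := by
  ext i j
  simp only [Matrix.mul_apply, Matrix.conjTranspose_apply, inclMat, Matrix.of_apply]
  simp [Finset.sum_mul, mul_ite, ite_mul, Finset.sum_ite_eq']

lemma inclMat_norm (f : n → m) (hf : Function.Injective f) [Nonempty n] :
    ‖inclMat (m := m) f‖ = 1 := by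
  have h2 := Matrix.l2_opNorm_conjTranspose_mul_self (inclMat (m := m) f)
  rw [inclMat_conjT_mul f hf] at h2
  rw [Matrix.cstar_norm_def, _root_.map_one] at h2
  have : ‖(1 : EuclideanSpace ℂ n →L[ℂ] EuclideanSpace ℂ n)‖ = 1 := norm_one
  rw [this] at h2
  nlinarith [norm_nonneg (inclMat (m := m) f)]

lemma inclMat_equiv_conjT (e : n ≃ m) : (inclMat (m := m) ⇑e)ᴴ = inclMat ⇑e.symm := by
  ext i j
  simp only [Matrix.conjTranspose_apply, inclMat, Matrix.of_apply]
  by_cases h : j = e i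
  · simp [h]
  · rw [if_neg h, if_neg (by simpa [Equiv.eq_symm_apply] using Ne.symm h), star_zero]

lemma permMatrix_eq_inclMat (σ : Equiv.Perm n) : σ.permMatrix ℂ = inclMat ⇑σ.symm := by
  ext i j
  simp only [Equiv.Perm.permMatrix, PEquiv.toMatrix_apply, Equiv.toPEquiv_apply, inclMat,
    Matrix.of_apply, Option.mem_def, Option.some.injEq]
  by_cases h : σ i = j
  · rw [if_pos h, if_pos (by rw [Equiv.eq_symm_apply, h])]
  · rw [if_neg h, if_neg (by rw [Equiv.eq_symm_apply]; exact fun hh => h hh)]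

lemma permMatrix_mem_unitary (σ : Equiv.Perm n) : σ.permMatrix ℂ ∈ Matrix.unitaryGroup n ℂ := by
  rw [Matrix.mem_unitaryGroup_iff']
  rw [permMatrix_eq_inclMat]
  exact inclMat_conjT_mul _ σ.symm.injective

lemma perm_conj (σ : Equiv.Perm n) (M : Matrix n n ℂ) :
    σ.permMatrix ℂ * M * (σ.permMatrix ℂ)ᴴ = Matrix.of fun i j => M (σ i) (σ j) := by
  rw [permMatrix_eq_inclMat, ← inclMat_equiv_conjT σ, Matrix.conjTranspose_conjTranspose,
    sandwich]

lemma reindex_sandwich (e : n ≃ m) (A : Matrix n n ℂ) :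
    Matrix.reindex e e A = (inclMat (m := n) ⇑e.symm)ᴴ * A * inclMat ⇑e.symm := by
  rw [sandwich]; rfl

lemma norm_reindex_le (e : n ≃ m) (A : Matrix n n ℂ) [Nonempty m] :
    ‖Matrix.reindex e e A‖ ≤ ‖A‖ := by
  rw [reindex_sandwich]
  calc ‖(inclMat (m := n) ⇑e.symm)ᴴ * A * inclMat ⇑e.symm‖
      ≤ ‖(inclMat (m := n) ⇑e.symm)ᴴ * A‖ * ‖inclMat (m := n) ⇑e.symm‖ := Matrix.l2_opNorm_mul _ _
    _ ≤ ‖(inclMat (m := n) ⇑e.symm)ᴴ‖ * ‖A‖ * ‖inclMat (m := n) ⇑e.symm‖ := by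
        gcongr; exact Matrix.l2_opNorm_mul _ _
    _ = ‖A‖ := by
        rw [Matrix.l2_opNorm_conjTranspose, inclMat_norm _ e.symm.injective]; ring

lemma norm_reindex (e : n ≃ m) (A : Matrix n n ℂ) [Nonempty m] :
    ‖Matrix.reindex e e A‖ = ‖A‖ := by
  have : Nonempty n := ⟨e.symm (Classical.arbitrary m)⟩
  refine le_antisymm (norm_reindex_le e A) ?_
  have := norm_reindex_le e.symm (Matrix.reindex e e A)
  simpa using this

lemma unitary_norm_one {U : Matrix n n ℂ} (hU : U ∈ Matrix.unitaryGroup n ℂ) [Nonempty n] :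
    ‖U‖ = 1 := by
  rw [Matrix.mem_unitaryGroup_iff'] at hU
  have h2 := Matrix.l2_opNorm_conjTranspose_mul_self U
  rw [show Uᴴ = star U from rfl, hU, matNormOne] at h2
  nlinarith [norm_nonneg U]

lemma euclid_norm_sq (x : EuclideanSpace ℂ n) : ‖x‖ ^ 2 = ∑ i, ‖x i‖ ^ 2 := by
  rw [EuclideanSpace.norm_eq, Real.sq_sqrt]
  positivity

lemma one_kron_norm_le (B : Matrix m m ℂ) : ‖(1 : Matrix n n ℂ) ⊗ₖ B‖ ≤ ‖B‖ := by
  rw [Matrix.cstar_norm_def]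
  refine ContinuousLinearMap.opNorm_le_bound _ (norm_nonneg B) (fun x => ?_)
  set z := toEuclideanCLM (𝕜 := ℂ) ((1 : Matrix n n ℂ) ⊗ₖ B) x with hzdef
  have hz : ∀ p, z p = (((1 : Matrix n n ℂ) ⊗ₖ B) *ᵥ (fun q => x q)) p := fun p => rfl
  have key : ∀ i j, z (i, j) = (B *ᵥ fun l => x (i, l)) j := by
    intro i j
    rw [hz]
    simp only [Matrix.mulVec, dotProduct, Fintype.sum_prod_type,
      Matrix.kroneckerMap_apply, Matrix.one_apply, ite_mul, zero_mul, mul_ite, mul_zero]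
    rw [Finset.sum_comm]
    simp [Finset.sum_ite_eq]
  have h1 : ‖z‖ ^ 2 ≤ (‖B‖ * ‖x‖) ^ 2 := by
    rw [euclid_norm_sq]
    rw [Fintype.sum_prod_type]
    have step : ∀ i : n, ∑ j, ‖z (i, j)‖ ^ 2 ≤ ‖B‖ ^ 2 * ∑ l, ‖x (i, l)‖ ^ 2 := by
      intro i
      set v : EuclideanSpace ℂ m := (EuclideanSpace.equiv m ℂ).symm (fun l => x (i, l)) with hv
      have hmv := Matrix.l2_opNorm_mulVec B v
      have h2 : ‖(EuclideanSpace.equiv m ℂ).symm (B *ᵥ v)‖ ^ 2 ≤ (‖B‖ * ‖v‖) ^ 2 := by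
        have h0 : (0:ℝ) ≤ ‖(EuclideanSpace.equiv m ℂ).symm (B *ᵥ v)‖ := norm_nonneg _
        nlinarith
      rw [euclid_norm_sq, mul_pow, euclid_norm_sq] at h2
      have hva : ∀ l, v l = x (i, l) := fun l => rfl
      have hbv : ∀ j, ((EuclideanSpace.equiv m ℂ).symm (B *ᵥ v)) j
          = (B *ᵥ fun l => x (i, l)) j := by
        intro j; rfl
      calc ∑ j, ‖z (i, j)‖ ^ 2
          = ∑ j, ‖((EuclideanSpace.equiv m ℂ).symm (B *ᵥ v)) j‖ ^ 2 := by
            simp_rw [key, hbv]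
        _ ≤ ‖B‖ ^ 2 * ∑ l, ‖v l‖ ^ 2 := h2
        _ = ‖B‖ ^ 2 * ∑ l, ‖x (i, l)‖ ^ 2 := by simp_rw [hva]
    calc ∑ i : n, ∑ j, ‖z (i, j)‖ ^ 2 ≤ ∑ i : n, ‖B‖ ^ 2 * ∑ l, ‖x (i, l)‖ ^ 2 :=
          Finset.sum_le_sum (fun i _ => step i)
      _ = ‖B‖ ^ 2 * ∑ i : n, ∑ l, ‖x (i, l)‖ ^ 2 := by rw [Finset.mul_sum]
      _ = (‖B‖ * ‖x‖) ^ 2 := by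
          rw [mul_pow, euclid_norm_sq x, Fintype.sum_prod_type]
  have h0 : (0:ℝ) ≤ ‖B‖ * ‖x‖ := by positivity
  nlinarith [norm_nonneg z]

lemma kron_one_eq_reindex (A : Matrix n n ℂ) :
    (A ⊗ₖ (1 : Matrix m m ℂ)) =
      Matrix.reindex (Equiv.prodComm m n) (Equiv.prodComm m n) ((1 : Matrix m m ℂ) ⊗ₖ A) := by
  ext ⟨i, j⟩ ⟨k, l⟩
  simp [Matrix.one_apply, mul_comm, ite_mul]

lemma kron_one_norm_le [Nonempty m] [Nonempty n] (A : Matrix n n ℂ) :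
    ‖A ⊗ₖ (1 : Matrix m m ℂ)‖ ≤ ‖A‖ := by
  rw [kron_one_eq_reindex, norm_reindex]
  exact one_kron_norm_le A

lemma kron_norm_le [Nonempty m] [Nonempty n] (A : Matrix n n ℂ) (B : Matrix m m ℂ) :
    ‖A ⊗ₖ B‖ ≤ ‖A‖ * ‖B‖ := by
  have : A ⊗ₖ B = (A ⊗ₖ (1 : Matrix m m ℂ)) * ((1 : Matrix n n ℂ) ⊗ₖ B) := by
    rw [← Matrix.mul_kronecker_mul, mul_one, one_mul]
  rw [this]
  calc ‖(A ⊗ₖ (1 : Matrix m m ℂ)) * ((1 : Matrix n n ℂ) ⊗ₖ B)‖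
      ≤ ‖A ⊗ₖ (1 : Matrix m m ℂ)‖ * ‖(1 : Matrix n n ℂ) ⊗ₖ B‖ := Matrix.l2_opNorm_mul _ _
    _ ≤ ‖A‖ * ‖B‖ :=
        mul_le_mul (kron_one_norm_le A) (one_kron_norm_le B) (norm_nonneg _) (norm_nonneg _)

lemma reindex_mem_unitary (e : n ≃ m) {U : Matrix n n ℂ} (hU : U ∈ Matrix.unitaryGroup n ℂ) :
    Matrix.reindex e e U ∈ Matrix.unitaryGroup m ℂ := by
  rw [Matrix.mem_unitaryGroup_iff] at hU ⊢
  have : star (Matrix.reindex e e U) = Matrix.reindex e e (star U) := by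
    simp [Matrix.star_eq_conjTranspose, Matrix.conjTranspose_reindex]
  rw [this, Matrix.reindex_apply, Matrix.reindex_apply, Matrix.submatrix_mul_equiv,
    ← Matrix.reindex_apply, hU]
  simp

lemma kron_mem_unitary {U : Matrix n n ℂ} {V : Matrix m m ℂ}
    (hU : U ∈ Matrix.unitaryGroup n ℂ) (hV : V ∈ Matrix.unitaryGroup m ℂ) :
    U ⊗ₖ V ∈ Matrix.unitaryGroup (n × m) ℂ := by
  rw [Matrix.mem_unitaryGroup_iff] at hU hV ⊢
  have hct : (U ⊗ₖ V)ᴴ = Uᴴ ⊗ₖ Vᴴ := by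
    ext ⟨i, j⟩ ⟨k, l⟩
    simp [Matrix.conjTranspose_apply, star_mul']
  rw [Matrix.star_eq_conjTranspose, hct, ← Matrix.mul_kronecker_mul]
  rw [Matrix.star_eq_conjTranspose] at hU hV
  rw [hU, hV, Matrix.one_kronecker_one]

lemma leadBlock_norm_le {N M : ℕ} (h : M ≤ N) (U : Matrix (Fin N) (Fin N) ℂ)
    (hU : U ∈ Matrix.unitaryGroup (Fin N) ℂ) [Nonempty (Fin M)] :
    ‖leadBlock h U‖ ≤ 1 := by
  have : Nonempty (Fin N) := ⟨Fin.castLE h (Classical.arbitrary (Fin M))⟩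
  have hlb : leadBlock h U = (inclMat (Fin.castLE h))ᴴ * U * inclMat (Fin.castLE h) := by
    rw [sandwich]; rfl
  rw [hlb]
  calc ‖(inclMat (Fin.castLE h))ᴴ * U * inclMat (Fin.castLE h)‖
      ≤ ‖(inclMat (Fin.castLE h))ᴴ * U‖ * ‖inclMat (Fin.castLE h)‖ := Matrix.l2_opNorm_mul _ _
    _ ≤ ‖(inclMat (Fin.castLE h))ᴴ‖ * ‖U‖ * ‖inclMat (Fin.castLE h)‖ := by
        gcongr; exact Matrix.l2_opNorm_mul _ _
    _ = 1 := by
        rw [Matrix.l2_opNorm_conjTranspose, inclMat_norm _ (Fin.castLE_injective h),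
          unitary_norm_one hU]
        ring

end Aux

/-! ### The permutation -/

lemma e1eq (a s b t : ℕ) : 2 ^ (a + b + (s + t)) = 2 ^ a * 2 ^ b * (2 ^ s * 2 ^ t) := by
  rw [pow_add, pow_add, pow_add]

lemma e2eq (a s b t : ℕ) : 2 ^ (a + s) * 2 ^ (b + t) = 2 ^ (a + b + (s + t)) := by
  rw [← pow_add]; congr 1; omega

def midPerm (a s b t : ℕ) : Equiv.Perm (Fin (2 ^ (a + b + (s + t)))) :=
  (finCongr (e1eq a s b t)).trans <|
  finProdFinEquiv.symm.trans <|
  (Equiv.prodCongr finProdFinEquiv.symm finProdFinEquiv.symm).trans <|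
  (Equiv.prodProdProdComm (Fin (2 ^ a)) (Fin (2 ^ b)) (Fin (2 ^ s)) (Fin (2 ^ t))).trans <|
  (Equiv.prodCongr finProdFinEquiv finProdFinEquiv).trans <|
  (Equiv.prodCongr (finCongr (pow_add 2 a s).symm) (finCongr (pow_add 2 b t).symm)).trans <|
  finProdFinEquiv.trans (finCongr (e2eq a s b t))

lemma midPerm_castLE (a s b t : ℕ) (i : Fin (2 ^ (s + t))) :
    midPerm a s b t (Fin.castLE (twoPowLe (a + b) (s + t)) i) =
      finCongr (e2eq a s b t) (finProdFinEquiv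
        (Fin.castLE (twoPowLe a s) (finProdFinEquiv.symm (finCongr (pow_add 2 s t) i)).1,
         Fin.castLE (twoPowLe b t) (finProdFinEquiv.symm (finCongr (pow_add 2 s t) i)).2)) := by
  have hv : (i : ℕ) < 2 ^ s * 2 ^ t := lt_of_lt_of_le i.isLt (le_of_eq (pow_add 2 s t))
  apply Fin.ext
  simp [midPerm, finProdFinEquiv, Fin.divNat, Fin.modNat, Nat.div_eq_of_lt hv,
    Nat.mod_eq_of_lt hv]

lemma lead_conj (a s b t : ℕ)
    (U : Matrix (Fin (2 ^ (a + s))) (Fin (2 ^ (a + s))) ℂ)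
    (V : Matrix (Fin (2 ^ (b + t))) (Fin (2 ^ (b + t))) ℂ) :
    leadBlock (twoPowLe (a + b) (s + t))
        ((midPerm a s b t).permMatrix ℂ * castSq (e2eq a s b t) (kron U V) *
          ((midPerm a s b t).permMatrix ℂ)ᴴ) =
      castSq (pow_add 2 s t).symm
        (kron (leadBlock (twoPowLe a s) U) (leadBlock (twoPowLe b t) V)) := by
  ext i j
  show ((midPerm a s b t).permMatrix ℂ * castSq (e2eq a s b t) (kron U V) *
      ((midPerm a s b t).permMatrix ℂ)ᴴ) (Fin.castLE _ i) (Fin.castLE _ j) = _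
  rw [perm_conj]
  simp only [Matrix.of_apply]
  rw [midPerm_castLE, midPerm_castLE]
  simp [castSq, kron, leadBlock, Matrix.reindex_apply, Matrix.submatrix_apply]

/-- Kronecker products of block-encodings (Lemma 1). There is a permutation
matrix `S` of size `2^(n+m)`, depending only on the dimensions `a, s, b, t`, such that for
every unitary `(α, a, ε₁)`-block-encoding `U` of `A` and every unitary
`(β, b, ε₂)`-block-encoding `V` of `B`, the matrix `S (U ⊗ V) S†` is an
`(αβ, a + b, αε₂ + βε₁ + ε₁ε₂)`-block-encoding of `A ⊗ B`. -/
theorem kron_blockEncoding (a s b t : ℕ) (α β ε₁ ε₂ : ℝ) (hα : 0 ≤ α) (hβ : 0 ≤ β) :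
    ∃ S : Matrix (Fin (2 ^ (a + b + (s + t)))) (Fin (2 ^ (a + b + (s + t)))) ℂ,
      IsPermMatrix S ∧
      ∀ (U : Matrix (Fin (2 ^ (a + s))) (Fin (2 ^ (a + s))) ℂ)
        (V : Matrix (Fin (2 ^ (b + t))) (Fin (2 ^ (b + t))) ℂ)
        (A : Matrix (Fin (2 ^ s)) (Fin (2 ^ s)) ℂ)
        (B : Matrix (Fin (2 ^ t)) (Fin (2 ^ t)) ℂ),
        IsBlockEncoding a s α ε₁ U A →
        IsBlockEncoding b t β ε₂ V B →
        IsBlockEncoding (a + b) (s + t) (α * β) (α * ε₂ + β * ε₁ + ε₁ * ε₂)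
          (S * castSq (by rw [← pow_add]; congr 1; omega) (kron U V) * Sᴴ)
          (castSq (pow_add 2 s t).symm (kron A B)) := by
  haveI h2s : Nonempty (Fin (2 ^ s)) := ⟨⟨0, Nat.two_pow_pos s⟩⟩
  haveI h2t : Nonempty (Fin (2 ^ t)) := ⟨⟨0, Nat.two_pow_pos t⟩⟩
  haveI h2st : Nonempty (Fin (2 ^ (s + t))) := ⟨⟨0, Nat.two_pow_pos _⟩⟩
  refine ⟨(midPerm a s b t).permMatrix ℂ, ⟨midPerm a s b t, rfl⟩, ?_⟩
  intro U V A B hUA hVB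
  obtain ⟨hU1, hU2⟩ := hUA
  obtain ⟨hV1, hV2⟩ := hVB
  constructor
  · -- unitarity
    have hkron : castSq (e2eq a s b t) (kron U V) ∈
        Matrix.unitaryGroup (Fin (2 ^ (a + b + (s + t)))) ℂ := by
      unfold castSq kron
      exact reindex_mem_unitary _ (reindex_mem_unitary _ (kron_mem_unitary hU1 hV1))
    exact mul_mem (mul_mem (permMatrix_mem_unitary _) hkron)
      (Unitary.star_mem (permMatrix_mem_unitary _))
  · -- the norm estimate
    set Ut := leadBlock (twoPowLe a s) U with hUt
    set Vt := leadBlock (twoPowLe b t) V with hVt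
    have hlead := lead_conj a s b t U V
    rw [hlead]
    rw [specNorm_eq] at hU2 hV2 ⊢
    set X := A - (α : ℂ) • Ut with hX
    set Y := B - (β : ℂ) • Vt with hY
    have hsplit : castSq (pow_add 2 s t).symm (kron A B) -
        ((α * β : ℝ) : ℂ) • castSq (pow_add 2 s t).symm (kron Ut Vt) =
        castSq (pow_add 2 s t).symm (Matrix.reindex finProdFinEquiv finProdFinEquiv
          (A ⊗ₖ B - ((α : ℂ) * (β : ℂ)) • (Ut ⊗ₖ Vt))) := by
      unfold castSq kron
      push_cast
      ext p q
      simp [Matrix.reindex_apply, Matrix.submatrix_apply]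
    rw [hsplit]
    simp only [castSq]
    rw [norm_reindex, norm_reindex]
    have hdecomp : A ⊗ₖ B - ((α : ℂ) * (β : ℂ)) • (Ut ⊗ₖ Vt) =
        A ⊗ₖ Y + X ⊗ₖ ((β : ℂ) • Vt) := by
      rw [hX, hY]
      ext ⟨i, j⟩ ⟨k, l⟩
      simp [Matrix.kroneckerMap_apply, Matrix.sub_apply, Matrix.smul_apply, smul_eq_mul]
      ring
    rw [hdecomp]
    have hXn : ‖X‖ ≤ ε₁ := hU2
    have hYn : ‖Y‖ ≤ ε₂ := hV2
    have hUtn : ‖Ut‖ ≤ 1 := leadBlock_norm_le _ U hU1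
    have hVtn : ‖Vt‖ ≤ 1 := leadBlock_norm_le _ V hV1
    have hAn : ‖A‖ ≤ ε₁ + α := by
      have : A = X + (α : ℂ) • Ut := by rw [hX]; abel
      rw [this]
      calc ‖X + (α : ℂ) • Ut‖ ≤ ‖X‖ + ‖(α : ℂ) • Ut‖ := norm_add_le _ _
        _ ≤ ε₁ + α := by
            rw [norm_smul, Complex.norm_real, Real.norm_eq_abs, abs_of_nonneg hα]
            nlinarith [norm_nonneg Ut, hUtn, hXn]
    have hbVn : ‖(β : ℂ) • Vt‖ ≤ β := by
      rw [norm_smul, Complex.norm_real, Real.norm_eq_abs, abs_of_nonneg hβ]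
      nlinarith [norm_nonneg Vt]
    have hε₁ : 0 ≤ ε₁ := le_trans (norm_nonneg X) hXn
    have hε₂ : 0 ≤ ε₂ := le_trans (norm_nonneg Y) hYn
    calc ‖A ⊗ₖ Y + X ⊗ₖ ((β : ℂ) • Vt)‖
        ≤ ‖A ⊗ₖ Y‖ + ‖X ⊗ₖ ((β : ℂ) • Vt)‖ := norm_add_le _ _
      _ ≤ ‖A‖ * ‖Y‖ + ‖X‖ * ‖(β : ℂ) • Vt‖ :=
          add_le_add (kron_norm_le _ _) (kron_norm_le _ _)
      _ ≤ (ε₁ + α) * ε₂ + ε₁ * β := by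
          apply add_le_add
          · exact mul_le_mul hAn hYn (norm_nonneg _) (by linarith)
          · exact mul_le_mul hXn hbVn (norm_nonneg _) hε₁
      _ = α * ε₂ + β * ε₁ + ε₁ * ε₂ := by ring
end

section
/- Let d ≥ 1 and, for i = 1, …, d, let n_i = a_i + s_i and let U_i be a 2^{n_i} × 2^{n_i} complex unitary matrix that is an (α_i, a_i, ε_i)-block-encoding of a 2^{s_i} × 2^{s_i} complex matrix A_i. Set n = Σ_i n_i, a = Σ_i a_i, s = Σ_i s_i. Then there exists a permutation matrix S of size 2^n × 2^n, depending only on the dimensions a_1, s_1, …, a_d, s_d, such that S (U_1 ⊗ U_2 ⊗ ⋯ ⊗ U_d) S† is a (∏_i α_i, a, ε)-block-encoding of A_1 ⊗ A_2 ⊗ ⋯ ⊗ A_d with ε = ∏_i (α_i + ε_i) − ∏_i α_i; in particular ε ≤ Σ_i ε_i ∏_{k ≠ i} (α_k + ε_k). -/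
open scoped Kronecker
open Matrix

/-- The iterated (flattened) Kronecker product `A 0 ⊗ A 1 ⊗ ⋯ ⊗ A (d-1)`. -/
noncomputable def kronProd : (d : ℕ) → (N : Fin d → ℕ) →
    ((i : Fin d) → Matrix (Fin (N i)) (Fin (N i)) ℂ) →
    Matrix (Fin (∏ i, N i)) (Fin (∏ i, N i)) ℂ
  | 0, _, _ => castSq (by simp) (1 : Matrix (Fin 1) (Fin 1) ℂ)
  | d + 1, N, A =>
      castSq (Fin.prod_univ_succ N).symm
        (kron (A 0) (kronProd d (fun i => N i.succ) (fun i => A i.succ)))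

open scoped Matrix.Norms.L2Operator

namespace BEaux
open Function

/-! ### Euclidean operator norm preliminaries -/

noncomputable def enorm {m : Type*} [Fintype m] (v : m → ℂ) : ℝ :=
  ‖((WithLp.equiv 2 (m → ℂ)).symm v : EuclideanSpace ℂ m)‖

lemma enorm_eq {m : Type*} [Fintype m] (v : m → ℂ) :
    enorm v = Real.sqrt (∑ i, ‖v i‖ ^ 2) := by
  rw [enorm, EuclideanSpace.norm_eq]; rfl

lemma enorm_sq {m : Type*} [Fintype m] (v : m → ℂ) : enorm v ^ 2 = ∑ i, ‖v i‖ ^ 2 := by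
  rw [enorm_eq, Real.sq_sqrt (Finset.sum_nonneg fun i _ => sq_nonneg _)]

lemma enorm_nonneg {m : Type*} [Fintype m] (v : m → ℂ) : 0 ≤ enorm v := norm_nonneg _

lemma enorm_mulVec_le {m n : Type*} [Fintype m] [Fintype n] [DecidableEq n]
    (A : Matrix m n ℂ) (v : n → ℂ) :
    enorm (A *ᵥ v) ≤ ‖A‖ * enorm v := by
  have := Matrix.l2_opNorm_mulVec A ((WithLp.equiv 2 (n → ℂ)).symm v)
  simpa [enorm] using this

lemma l2_opNorm_le_of_mulVec {m n : Type*} [Fintype m] [Fintype n] [DecidableEq n]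
    {A : Matrix m n ℂ} {c : ℝ} (hc : 0 ≤ c)
    (h : ∀ v : n → ℂ, enorm (A *ᵥ v) ≤ c * enorm v) : ‖A‖ ≤ c := by
  rw [Matrix.l2_opNorm_def]
  refine ContinuousLinearMap.opNorm_le_bound _ hc fun x => ?_
  have := h ((WithLp.equiv 2 (n → ℂ)) x)
  simpa [enorm, Matrix.toEuclideanLin_apply] using this

lemma l2_opNorm_submatrix_le {m n p q : Type*} [Fintype m] [Fintype n] [Fintype p] [Fintype q]
    [DecidableEq n] [DecidableEq q]
    (A : Matrix m n ℂ) (f : p → m) (g : q → n) (hf : Injective f) (hg : Injective g) :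
    ‖A.submatrix f g‖ ≤ ‖A‖ := by
  classical
  refine l2_opNorm_le_of_mulVec (norm_nonneg _) fun x => ?_
  set y : n → ℂ := fun j => if h : ∃ j0, g j0 = j then x h.choose else 0 with hy
  have hygq : ∀ q0, y (g q0) = x q0 := by
    intro q0
    have hex : ∃ j0, g j0 = g q0 := ⟨q0, rfl⟩
    have : hex.choose = q0 := hg hex.choose_spec
    simp [hy, dif_pos hex, this]
  have hyoff : ∀ j, (¬∃ j0, g j0 = j) → y j = 0 := fun j hj => by simp [hy, dif_neg hj]
  have heny : enorm y = enorm x := by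
    rw [enorm_eq, enorm_eq]
    congr 1
    rw [← Finset.sum_subset (Finset.subset_univ ((Finset.univ : Finset q).image g))
      (fun j _ hj => by
        have : ¬∃ j0, g j0 = j := by simpa [Finset.mem_image] using hj
        simp [hyoff j this]),
      Finset.sum_image (fun a _ b _ hab => hg hab)]
    exact Finset.sum_congr rfl fun q0 _ => by rw [hygq]
  have hmv : ∀ i, ((A.submatrix f g) *ᵥ x) i = (A *ᵥ y) (f i) := by
    intro i
    simp only [Matrix.mulVec, dotProduct, Matrix.submatrix_apply]
    rw [← Finset.sum_subset (Finset.subset_univ ((Finset.univ : Finset q).image g))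
      (fun j _ hj => by
        have : ¬∃ j0, g j0 = j := by simpa [Finset.mem_image] using hj
        simp [hyoff j this]),
      Finset.sum_image (fun a _ b _ hab => hg hab)]
    exact Finset.sum_congr rfl fun q0 _ => by rw [hygq]
  calc enorm ((A.submatrix f g) *ᵥ x)
      ≤ enorm (A *ᵥ y) := by
        rw [enorm_eq, enorm_eq]
        apply Real.sqrt_le_sqrt
        calc ∑ i, ‖((A.submatrix f g) *ᵥ x) i‖ ^ 2
            = ∑ i, ‖(A *ᵥ y) (f i)‖ ^ 2 :=
              Finset.sum_congr rfl fun i _ => by rw [hmv]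
          _ = ∑ i ∈ (Finset.univ : Finset p).image f, ‖(A *ᵥ y) i‖ ^ 2 := by
              rw [Finset.sum_image (fun a _ b _ hab => hf hab)]
          _ ≤ ∑ i, ‖(A *ᵥ y) i‖ ^ 2 :=
              Finset.sum_le_sum_of_subset_of_nonneg (Finset.subset_univ _)
                (fun i _ _ => sq_nonneg _)
    _ ≤ ‖A‖ * enorm y := enorm_mulVec_le A y
    _ = ‖A‖ * enorm x := by rw [heny]

lemma l2_opNorm_kron_one_le {m n q : Type*} [Fintype m] [Fintype n] [Fintype q]
    [DecidableEq n] [DecidableEq q] (A : Matrix m n ℂ) :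
    ‖A ⊗ₖ (1 : Matrix q q ℂ)‖ ≤ ‖A‖ := by
  refine l2_opNorm_le_of_mulVec (norm_nonneg _) fun x => ?_
  have hmv : ∀ i : m × q, ((A ⊗ₖ (1 : Matrix q q ℂ)) *ᵥ x) i
      = (A *ᵥ fun k => x (k, i.2)) i.1 := by
    rintro ⟨i, j⟩
    simp only [Matrix.mulVec, dotProduct, Matrix.kroneckerMap_apply]
    rw [Fintype.sum_prod_type]
    simp [Matrix.one_apply, mul_ite, ite_mul, mul_assoc, Finset.sum_ite_eq, Finset.sum_ite_eq']
  have key : enorm ((A ⊗ₖ (1 : Matrix q q ℂ)) *ᵥ x) ^ 2 ≤ (‖A‖ * enorm x) ^ 2 := by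
    rw [enorm_sq]
    calc ∑ i : m × q, ‖((A ⊗ₖ (1 : Matrix q q ℂ)) *ᵥ x) i‖ ^ 2
        = ∑ j : q, ∑ i : m, ‖(A *ᵥ fun k : n => x (k, j)) i‖ ^ 2 := by
          rw [Fintype.sum_prod_type, Finset.sum_comm]
          exact Finset.sum_congr rfl fun j _ => Finset.sum_congr rfl fun i _ => by
            rw [hmv (i, j)]
      _ = ∑ j : q, enorm (A *ᵥ fun k : n => x (k, j)) ^ 2 :=
          Finset.sum_congr rfl fun j _ => (enorm_sq _).symm
      _ ≤ ∑ j : q, (‖A‖ * enorm fun k : n => x (k, j)) ^ 2 := by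
          refine Finset.sum_le_sum fun j _ => ?_
          have := enorm_mulVec_le A (fun k : n => x (k, j))
          exact pow_le_pow_left₀ (enorm_nonneg _) this 2
      _ = ‖A‖ ^ 2 * ∑ j : q, ∑ k : n, ‖x (k, j)‖ ^ 2 := by
          rw [Finset.mul_sum]
          refine Finset.sum_congr rfl fun j _ => ?_
          rw [mul_pow, enorm_sq]
      _ = (‖A‖ * enorm x) ^ 2 := by
          rw [mul_pow, enorm_sq, Fintype.sum_prod_type, Finset.sum_comm]
  have h1 := enorm_nonneg ((A ⊗ₖ (1 : Matrix q q ℂ)) *ᵥ x)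
  have h2 : 0 ≤ ‖A‖ * enorm x := mul_nonneg (norm_nonneg _) (enorm_nonneg _)
  nlinarith [key]

lemma l2_opNorm_one_kron_le {m p q : Type*} [Fintype m] [Fintype p] [Fintype q]
    [DecidableEq m] [DecidableEq q] (B : Matrix p q ℂ) :
    ‖(1 : Matrix m m ℂ) ⊗ₖ B‖ ≤ ‖B‖ := by
  have hsub : (1 : Matrix m m ℂ) ⊗ₖ B
      = (B ⊗ₖ (1 : Matrix m m ℂ)).submatrix Prod.swap Prod.swap := by
    ext ⟨i, j⟩ ⟨k, l⟩
    simp [Matrix.kroneckerMap_apply, mul_comm]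
  rw [hsub]
  exact le_trans
    (l2_opNorm_submatrix_le _ _ _ Prod.swap_injective Prod.swap_injective)
    (l2_opNorm_kron_one_le B)

lemma l2_opNorm_kronecker_le {m q : Type*} [Fintype m] [Fintype q]
    [DecidableEq m] [DecidableEq q]
    (A : Matrix m m ℂ) (B : Matrix q q ℂ) :
    ‖A ⊗ₖ B‖ ≤ ‖A‖ * ‖B‖ := by
  have h : A ⊗ₖ B = (A ⊗ₖ (1 : Matrix q q ℂ)) * ((1 : Matrix m m ℂ) ⊗ₖ B) := by
    rw [← Matrix.mul_kronecker_mul, Matrix.mul_one, Matrix.one_mul]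
  rw [h]
  have h1 : ‖(A ⊗ₖ (1 : Matrix q q ℂ)) * ((1 : Matrix m m ℂ) ⊗ₖ B)‖
      ≤ ‖A ⊗ₖ (1 : Matrix q q ℂ)‖ * ‖(1 : Matrix m m ℂ) ⊗ₖ B‖ :=
    Matrix.l2_opNorm_mul (A ⊗ₖ (1 : Matrix q q ℂ)) ((1 : Matrix m m ℂ) ⊗ₖ B)
  exact le_trans h1 (mul_le_mul (l2_opNorm_kron_one_le A) (l2_opNorm_one_kron_le B)
    (norm_nonneg _) (norm_nonneg _))

lemma norm_one_le {α : Type*} [Fintype α] [DecidableEq α] : ‖(1 : Matrix α α ℂ)‖ ≤ 1 := by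
  rw [Matrix.l2_opNorm_def]
  refine ContinuousLinearMap.opNorm_le_bound _ zero_le_one fun x => ?_
  rw [one_mul]
  apply le_of_eq
  congr 1
  simp [Matrix.toEuclideanLin_apply]

lemma unitary_norm_le {α : Type*} [Fintype α] [DecidableEq α] {U : Matrix α α ℂ}
    (hU : U ∈ Matrix.unitaryGroup α ℂ) : ‖U‖ ≤ 1 := by
  have h1 : star U * U = 1 := hU.1
  have h2 : ‖Uᴴ * U‖ = ‖U‖ * ‖U‖ := Matrix.l2_opNorm_conjTranspose_mul_self U
  rw [← Matrix.star_eq_conjTranspose, h1] at h2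
  have h3 : ‖U‖ * ‖U‖ ≤ 1 := h2 ▸ norm_one_le
  nlinarith [norm_nonneg U]

lemma specNorm_eq_l2 {α : Type*} [Fintype α] [DecidableEq α] (A : Matrix α α ℂ) :
    specNorm A = ‖A‖ := rfl

/-! ### `kron`, `castSq`, `kronProd` algebra -/

lemma l2_opNorm_reindex {m n p q : Type*} [Fintype m] [Fintype n] [Fintype p] [Fintype q]
    [DecidableEq m] [DecidableEq n] [DecidableEq p] [DecidableEq q]
    (e₁ : m ≃ p) (e₂ : n ≃ q) (A : Matrix m n ℂ) :
    ‖Matrix.reindex e₁ e₂ A‖ = ‖A‖ := by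
  refine le_antisymm
    (l2_opNorm_submatrix_le A e₁.symm e₂.symm e₁.symm.injective e₂.symm.injective) ?_
  have h : A = (Matrix.reindex e₁ e₂ A).submatrix e₁ e₂ := by
    ext i j; simp
  conv_lhs => rw [h]
  exact l2_opNorm_submatrix_le _ e₁ e₂ e₁.injective e₂.injective

lemma norm_castSq {N M : ℕ} (h : N = M) (A : Matrix (Fin N) (Fin N) ℂ) :
    ‖castSq h A‖ = ‖A‖ := l2_opNorm_reindex _ _ _

lemma norm_kron_le {N M : ℕ} (A : Matrix (Fin N) (Fin N) ℂ) (B : Matrix (Fin M) (Fin M) ℂ) :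
    ‖kron A B‖ ≤ ‖A‖ * ‖B‖ := by
  rw [kron, l2_opNorm_reindex]
  exact l2_opNorm_kronecker_le A B

lemma castSq_sub {N M : ℕ} (h : N = M) (A B : Matrix (Fin N) (Fin N) ℂ) :
    castSq h (A - B) = castSq h A - castSq h B := by
  ext i j; simp [castSq]

lemma castSq_smul {N M : ℕ} (h : N = M) (r : ℂ) (A : Matrix (Fin N) (Fin N) ℂ) :
    castSq h (r • A) = r • castSq h A := by
  ext i j; simp [castSq]

lemma kron_sub_left {N M : ℕ} (A B : Matrix (Fin N) (Fin N) ℂ) (C : Matrix (Fin M) (Fin M) ℂ) :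
    kron (A - B) C = kron A C - kron B C := by
  ext i j; simp [kron, Matrix.kroneckerMap_apply, sub_mul]

lemma kron_sub_right {N M : ℕ} (A : Matrix (Fin N) (Fin N) ℂ) (B C : Matrix (Fin M) (Fin M) ℂ) :
    kron A (B - C) = kron A B - kron A C := by
  ext i j; simp [kron, Matrix.kroneckerMap_apply, mul_sub]

lemma kron_smul_left {N M : ℕ} (r : ℂ) (A : Matrix (Fin N) (Fin N) ℂ)
    (B : Matrix (Fin M) (Fin M) ℂ) : kron (r • A) B = r • kron A B := by
  ext i j; simp [kron, Matrix.kroneckerMap_apply]; ring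

lemma kron_smul_right {N M : ℕ} (r : ℂ) (A : Matrix (Fin N) (Fin N) ℂ)
    (B : Matrix (Fin M) (Fin M) ℂ) : kron A (r • B) = r • kron A B := by
  ext i j; simp [kron, Matrix.kroneckerMap_apply]; ring

lemma conjTranspose_kron {N M : ℕ} (A : Matrix (Fin N) (Fin N) ℂ) (B : Matrix (Fin M) (Fin M) ℂ) :
    (kron A B)ᴴ = kron Aᴴ Bᴴ := by
  ext i j
  simp [kron, Matrix.kroneckerMap_apply, Matrix.conjTranspose_apply, mul_comm]

lemma kron_mul {N M : ℕ} (A B : Matrix (Fin N) (Fin N) ℂ) (C D : Matrix (Fin M) (Fin M) ℂ) :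
    kron (A * B) (C * D) = kron A C * kron B D := by
  unfold kron
  rw [Matrix.mul_kronecker_mul]
  simp only [Matrix.reindex_apply]
  rw [Matrix.submatrix_mul_equiv]

lemma kron_one {N M : ℕ} : kron (1 : Matrix (Fin N) (Fin N) ℂ) (1 : Matrix (Fin M) (Fin M) ℂ)
    = 1 := by
  unfold kron
  rw [Matrix.one_kronecker_one, Matrix.reindex_apply, Matrix.submatrix_one_equiv]

lemma castSq_mul {N M : ℕ} (h : N = M) (A B : Matrix (Fin N) (Fin N) ℂ) :
    castSq h (A * B) = castSq h A * castSq h B := by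
  unfold castSq
  simp only [Matrix.reindex_apply]
  rw [Matrix.submatrix_mul_equiv]

lemma castSq_conjTranspose {N M : ℕ} (h : N = M) (A : Matrix (Fin N) (Fin N) ℂ) :
    (castSq h A)ᴴ = castSq h Aᴴ := by
  ext i j; simp [castSq, Matrix.conjTranspose_apply]

lemma castSq_one {N M : ℕ} (h : N = M) : castSq h (1 : Matrix (Fin N) (Fin N) ℂ) = 1 := by
  unfold castSq
  rw [Matrix.reindex_apply, Matrix.submatrix_one_equiv]

lemma kron_unitary {N M : ℕ} {A : Matrix (Fin N) (Fin N) ℂ} {B : Matrix (Fin M) (Fin M) ℂ}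
    (hA : A ∈ Matrix.unitaryGroup (Fin N) ℂ) (hB : B ∈ Matrix.unitaryGroup (Fin M) ℂ) :
    kron A B ∈ Matrix.unitaryGroup (Fin (N * M)) ℂ := by
  rw [Matrix.mem_unitaryGroup_iff] at *
  rw [Matrix.star_eq_conjTranspose, conjTranspose_kron, ← kron_mul,
    ← Matrix.star_eq_conjTranspose, ← Matrix.star_eq_conjTranspose, hA, hB, kron_one]

lemma castSq_unitary {N M : ℕ} (h : N = M) {A : Matrix (Fin N) (Fin N) ℂ}
    (hA : A ∈ Matrix.unitaryGroup (Fin N) ℂ) :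
    castSq h A ∈ Matrix.unitaryGroup (Fin M) ℂ := by
  rw [Matrix.mem_unitaryGroup_iff] at *
  rw [Matrix.star_eq_conjTranspose, castSq_conjTranspose, ← castSq_mul,
    ← Matrix.star_eq_conjTranspose, hA, castSq_one]

lemma kronProd_unitary (d : ℕ) (N : Fin d → ℕ)
    (U : (i : Fin d) → Matrix (Fin (N i)) (Fin (N i)) ℂ)
    (hU : ∀ i, U i ∈ Matrix.unitaryGroup (Fin (N i)) ℂ) :
    kronProd d N U ∈ Matrix.unitaryGroup (Fin (∏ i, N i)) ℂ := by
  induction d with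
  | zero =>
      simp only [kronProd]
      exact castSq_unitary _ (by simp [Matrix.mem_unitaryGroup_iff])
  | succ d ih =>
      simp only [kronProd]
      exact castSq_unitary _ (kron_unitary (hU 0) (ih _ _ fun i => hU i.succ))

lemma kronProd_norm_le (d : ℕ) (N : Fin d → ℕ)
    (A : (i : Fin d) → Matrix (Fin (N i)) (Fin (N i)) ℂ) (c : Fin d → ℝ)
    (hc : ∀ i, ‖A i‖ ≤ c i) :
    ‖kronProd d N A‖ ≤ ∏ i, c i := by
  induction d with
  | zero =>
      simp only [kronProd, norm_castSq]
      simpa using norm_one_le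
  | succ d ih =>
      simp only [kronProd, norm_castSq]
      rw [Fin.prod_univ_succ]
      calc ‖kron (A 0) (kronProd d (fun i => N i.succ) fun i => A i.succ)‖
          ≤ ‖A 0‖ * ‖kronProd d (fun i => N i.succ) fun i => A i.succ‖ := norm_kron_le _ _
        _ ≤ c 0 * ∏ i : Fin d, c i.succ := by
            apply mul_le_mul (hc 0) (ih _ _ _ fun i => hc i.succ) (norm_nonneg _)
            exact le_trans (norm_nonneg _) (hc 0)

lemma kronProd_smul (d : ℕ) (N : Fin d → ℕ) (r : Fin d → ℂ)
    (A : (i : Fin d) → Matrix (Fin (N i)) (Fin (N i)) ℂ) :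
    kronProd d N (fun i => r i • A i) = (∏ i, r i) • kronProd d N A := by
  induction d with
  | zero => simp [kronProd]
  | succ d ih =>
      simp only [kronProd]
      rw [ih _ _ _, kron_smul_left, kron_smul_right, castSq_smul, castSq_smul,
        smul_smul, Fin.prod_univ_succ r]

lemma kronProd_sub_bound (d : ℕ) (N : Fin d → ℕ)
    (A B : (i : Fin d) → Matrix (Fin (N i)) (Fin (N i)) ℂ) (ε c : Fin d → ℝ)
    (hε : ∀ i, ‖A i - B i‖ ≤ ε i) (hc : ∀ i, ‖B i‖ ≤ c i) (hc0 : ∀ i, 0 ≤ c i) :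
    ‖kronProd d N A - kronProd d N B‖ ≤ (∏ i, (c i + ε i)) - ∏ i, c i := by
  induction d with
  | zero => simp [kronProd]
  | succ d ih =>
      simp only [kronProd, ← castSq_sub, norm_castSq]
      have hKA : ‖kronProd d (fun i => N i.succ) fun i => A i.succ‖
          ≤ ∏ i : Fin d, (c i.succ + ε i.succ) := by
        refine kronProd_norm_le _ _ _ _ fun i => ?_
        calc ‖A i.succ‖ = ‖(A i.succ - B i.succ) + B i.succ‖ := by rw [sub_add_cancel]
          _ ≤ ‖A i.succ - B i.succ‖ + ‖B i.succ‖ := norm_add_le _ _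
          _ ≤ ε i.succ + c i.succ := add_le_add (hε _) (hc _)
          _ = c i.succ + ε i.succ := by ring
      have hKdiff := ih _ (fun i => A i.succ) (fun i => B i.succ) (fun i => ε i.succ)
        (fun i => c i.succ) (fun i => hε i.succ) (fun i => hc i.succ) (fun i => hc0 i.succ)
      have key : kron (A 0) (kronProd d (fun i => N i.succ) fun i => A i.succ)
            - kron (B 0) (kronProd d (fun i => N i.succ) fun i => B i.succ)
          = kron (A 0 - B 0) (kronProd d (fun i => N i.succ) fun i => A i.succ)
            + kron (B 0) ((kronProd d (fun i => N i.succ) fun i => A i.succ)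
                - kronProd d (fun i => N i.succ) fun i => B i.succ) := by
        rw [kron_sub_left, kron_sub_right]; abel
      rw [key]
      have hε00 : 0 ≤ ε 0 := le_trans (norm_nonneg _) (hε 0)
      calc ‖_ + _‖ ≤ ‖kron (A 0 - B 0) (kronProd d (fun i => N i.succ) fun i => A i.succ)‖
            + ‖kron (B 0) ((kronProd d (fun i => N i.succ) fun i => A i.succ)
                - kronProd d (fun i => N i.succ) fun i => B i.succ)‖ := norm_add_le _ _
        _ ≤ ε 0 * (∏ i : Fin d, (c i.succ + ε i.succ))
            + c 0 * ((∏ i : Fin d, (c i.succ + ε i.succ)) - ∏ i : Fin d, c i.succ) := by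
            refine add_le_add ?_ ?_
            · exact le_trans (norm_kron_le _ _)
                (mul_le_mul (hε 0) hKA (norm_nonneg _) hε00)
            · exact le_trans (norm_kron_le _ _)
                (mul_le_mul (hc 0) hKdiff (norm_nonneg _) (hc0 0))
        _ = (∏ i, (c i + ε i)) - ∏ i, c i := by
            rw [Fin.prod_univ_succ (fun i => c i + ε i), Fin.prod_univ_succ c]
            ring

/-! ### Index combinatorics -/

/-- The encoding equivalence matching the recursion of `kronProd`. -/
def enc : (d : ℕ) → (N : Fin d → ℕ) → ((i : Fin d) → Fin (N i)) ≃ Fin (∏ i, N i)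
  | 0, _ => (Equiv.ofUnique _ (Fin 1)).trans (finCongr (by simp))
  | d + 1, N =>
      (Fin.consEquiv (fun i => Fin (N i))).symm.trans
        ((Equiv.prodCongr (Equiv.refl (Fin (N 0))) (enc d fun i => N i.succ)).trans
          (finProdFinEquiv.trans (finCongr (Fin.prod_univ_succ N).symm)))

lemma castSq_apply {N M : ℕ} (h : N = M) (A : Matrix (Fin N) (Fin N) ℂ) (i j : Fin N) :
    castSq h A (finCongr h i) (finCongr h j) = A i j := by
  simp [castSq]

lemma kron_apply' {N M : ℕ} (A : Matrix (Fin N) (Fin N) ℂ) (B : Matrix (Fin M) (Fin M) ℂ)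
    (i k : Fin N) (j l : Fin M) :
    kron A B (finProdFinEquiv (i, j)) (finProdFinEquiv (k, l)) = A i k * B j l := by
  simp [kron]

lemma kronProd_apply (d : ℕ) (N : Fin d → ℕ)
    (A : (i : Fin d) → Matrix (Fin (N i)) (Fin (N i)) ℂ)
    (x y : (i : Fin d) → Fin (N i)) :
    kronProd d N A (enc d N x) (enc d N y) = ∏ i, A i (x i) (y i) := by
  induction d with
  | zero =>
      have h0 : ∀ z : (i : Fin 0) → Fin (N i), enc 0 N z = finCongr (by simp) (0 : Fin 1) := by
        intro z; rfl
      rw [h0 x, h0 y]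
      simp only [kronProd]
      rw [castSq_apply]
      simp [Matrix.one_apply]
  | succ d ih =>
      have hx : ∀ z : (i : Fin (d+1)) → Fin (N i),
          enc (d+1) N z = finCongr (Fin.prod_univ_succ N).symm
            (finProdFinEquiv (z 0, enc d (fun i => N i.succ) (fun i => z i.succ))) := by
        intro z; rfl
      rw [hx x, hx y]
      simp only [kronProd]
      rw [castSq_apply, kron_apply', ih, Fin.prod_univ_succ]

/-- Any two injections from a finite type into a finite type can be intertwined
by a permutation of the target. -/
lemma exists_perm_comp {β α : Type*} [Fintype α] [Fintype β] [DecidableEq α] [DecidableEq β]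
    (f g : β → α) (hf : Injective f) (hg : Injective g) :
    ∃ e : Equiv.Perm α, ∀ b, e (f b) = g b := by
  classical
  let p : α → Prop := fun x => x ∈ Set.range f
  let q : α → Prop := fun x => x ∈ Set.range g
  have hcard : Fintype.card {x // ¬p x} = Fintype.card {x // ¬q x} := by
    have h1 : Fintype.card {x // p x} = Fintype.card β :=
      Fintype.card_congr (Equiv.ofInjective f hf).symm
    have h2 : Fintype.card {x // q x} = Fintype.card β :=
      Fintype.card_congr (Equiv.ofInjective g hg).symm
    rw [Fintype.card_subtype_compl, Fintype.card_subtype_compl, h1, h2]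
  let epq : {x // p x} ≃ {x // q x} := (Equiv.ofInjective f hf).symm.trans (Equiv.ofInjective g hg)
  let ecompl : {x // ¬p x} ≃ {x // ¬q x} := Fintype.equivOfCardEq hcard
  refine ⟨(Equiv.sumCompl p).symm.trans ((Equiv.sumCongr epq ecompl).trans (Equiv.sumCompl q)), ?_⟩
  intro b
  have hpb : p (f b) := ⟨b, rfl⟩
  simp only [Equiv.trans_apply]
  rw [Equiv.sumCompl_symm_apply_of_pos hpb]
  have h3 : epq ⟨f b, hpb⟩ = ⟨g b, ⟨b, rfl⟩⟩ := by
    simp only [epq, Equiv.trans_apply]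
    rw [Equiv.ofInjective_symm_apply]
    rfl
  simp [h3]

lemma permMatrix_conj_apply {α : Type*} [Fintype α] [DecidableEq α]
    (e : Equiv.Perm α) (X : Matrix α α ℂ) (i j : α) :
    ((e.permMatrix ℂ) * X * (e.permMatrix ℂ)ᴴ) i j = X (e i) (e j) := by
  have hm : ∀ (Y : Matrix α α ℂ) i j, ((e.permMatrix ℂ) * Y) i j = Y (e i) j := by
    intro Y i j
    simp only [Matrix.mul_apply, Equiv.Perm.permMatrix, PEquiv.toMatrix_apply,
      Equiv.toPEquiv_apply, Option.mem_some_iff, ite_mul, one_mul, zero_mul]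
    simp [eq_comm]
  rw [Matrix.mul_assoc, hm]
  simp only [Matrix.mul_apply, Matrix.conjTranspose_apply, Equiv.Perm.permMatrix,
    PEquiv.toMatrix_apply, Equiv.toPEquiv_apply, Option.mem_some_iff]
  simp [eq_comm, starRingEnd_apply, apply_ite]

lemma permMatrix_mem_unitaryGroup {α : Type*} [Fintype α] [DecidableEq α] (e : Equiv.Perm α) :
    (e.permMatrix ℂ) ∈ Matrix.unitaryGroup α ℂ := by
  rw [Matrix.mem_unitaryGroup_iff]
  ext i j
  simp only [Matrix.mul_apply, Matrix.star_eq_conjTranspose, Matrix.conjTranspose_apply,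
    Equiv.Perm.permMatrix, PEquiv.toMatrix_apply, Equiv.toPEquiv_apply, Option.mem_some_iff]
  simp [apply_ite, starRingEnd_apply, Matrix.one_apply, Finset.sum_ite_eq',
    e.injective.eq_iff, eq_comm]

lemma prod_sub_prod_le {ι : Type*} [DecidableEq ι] (t : Finset ι) (α ε : ι → ℝ)
    (hα : ∀ i, 0 ≤ α i) (hε : ∀ i, 0 ≤ ε i) :
    (∏ i ∈ t, (α i + ε i)) - ∏ i ∈ t, α i
      ≤ ∑ i ∈ t, ε i * ∏ k ∈ t.erase i, (α k + ε k) := by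
  classical
  induction t using Finset.induction_on with
  | empty => simp
  | @insert j t hj ih =>
      have hPce : (0:ℝ) ≤ ∏ k ∈ t, (α k + ε k) :=
        Finset.prod_nonneg fun k _ => by linarith [hα k, hε k]
      calc (∏ i ∈ insert j t, (α i + ε i)) - ∏ i ∈ insert j t, α i
          = ε j * ∏ i ∈ t, (α i + ε i)
            + α j * ((∏ i ∈ t, (α i + ε i)) - ∏ i ∈ t, α i) := by
            rw [Finset.prod_insert hj, Finset.prod_insert hj]; ring
        _ ≤ ε j * ∏ i ∈ t, (α i + ε i)
            + α j * ∑ i ∈ t, ε i * ∏ k ∈ t.erase i, (α k + ε k) :=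
            add_le_add_right (mul_le_mul_of_nonneg_left ih (hα j)) _
        _ ≤ ε j * ∏ i ∈ t, (α i + ε i)
            + ∑ i ∈ t, ε i * ∏ k ∈ (insert j t).erase i, (α k + ε k) := by
            rw [Finset.mul_sum]
            refine add_le_add_right (Finset.sum_le_sum fun i hi => ?_) _
            have hij : i ≠ j := fun h => hj (h ▸ hi)
            rw [Finset.erase_insert_of_ne hij.symm,
              Finset.prod_insert (fun h => hj (Finset.mem_of_mem_erase h))]
            have hP : (0:ℝ) ≤ ∏ k ∈ t.erase i, (α k + ε k) :=
              Finset.prod_nonneg fun k _ => by linarith [hα k, hε k]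
            nlinarith [mul_nonneg (mul_nonneg (hε i) (hε j)) hP]
        _ = ∑ i ∈ insert j t, ε i * ∏ k ∈ (insert j t).erase i, (α k + ε k) := by
            rw [Finset.sum_insert hj, Finset.erase_insert hj]

end BEaux

/-- Kronecker products of `d` block-encodings. There is a permutation matrix
`S`, depending only on the dimensions `a i, s i`, such that whenever each `U i` is an
`(α i, a i, ε i)`-block-encoding of `A i`, the matrix `S (U 1 ⊗ ⋯ ⊗ U d) S†` is a
`(∏ α i, ∑ a i, ε)`-block-encoding of `A 1 ⊗ ⋯ ⊗ A d` with
`ε = ∏ (α i + ε i) − ∏ α i`; in particular `ε ≤ ∑ i, ε i * ∏_{k ≠ i} (α k + ε k)`. -/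
theorem kron_blockEncoding_d (d : ℕ) (hd : 1 ≤ d) (a s : Fin d → ℕ) (α ε : Fin d → ℝ)
    (hα : ∀ i, 0 ≤ α i) (hε : ∀ i, 0 ≤ ε i) :
    (∃ S : Matrix (Fin (2 ^ ((∑ i, a i) + ∑ i, s i)))
             (Fin (2 ^ ((∑ i, a i) + ∑ i, s i))) ℂ,
      IsPermMatrix S ∧
      ∀ (U : (i : Fin d) → Matrix (Fin (2 ^ (a i + s i))) (Fin (2 ^ (a i + s i))) ℂ)
        (A : (i : Fin d) → Matrix (Fin (2 ^ (s i))) (Fin (2 ^ (s i))) ℂ),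
        (∀ i, IsBlockEncoding (a i) (s i) (α i) (ε i) (U i) (A i)) →
        IsBlockEncoding (∑ i, a i) (∑ i, s i) (∏ i, α i)
          ((∏ i, (α i + ε i)) - ∏ i, α i)
          (S * castSq (by rw [Finset.prod_pow_eq_pow_sum, Finset.sum_add_distrib])
                 (kronProd d _ U) * Sᴴ)
          (castSq (Finset.prod_pow_eq_pow_sum Finset.univ s 2) (kronProd d _ A))) ∧
    (∏ i, (α i + ε i)) - (∏ i, α i)
      ≤ ∑ i, ε i * ∏ k ∈ Finset.univ.erase i, (α k + ε k) := by
  classical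
  have hA : (∏ i, 2 ^ s i) = 2 ^ (∑ i, s i) := Finset.prod_pow_eq_pow_sum Finset.univ s 2
  have hUeq : (∏ i, 2 ^ (a i + s i)) = 2 ^ ((∑ i, a i) + ∑ i, s i) := by
    rw [Finset.prod_pow_eq_pow_sum, Finset.sum_add_distrib]
  refine ⟨?_, BEaux.prod_sub_prod_le Finset.univ α ε hα hε⟩
  have hfinj : Function.Injective (fun x : (i : Fin d) → Fin (2 ^ s i) =>
      Fin.castLE (twoPowLe (∑ i, a i) (∑ i, s i))
        (finCongr hA (BEaux.enc d (fun i => 2 ^ s i) x))) := by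
    intro x y hxy
    apply (BEaux.enc d (fun i => 2 ^ s i)).injective
    apply (finCongr hA).injective
    exact Fin.castLE_injective _ hxy
  have hginj : Function.Injective (fun x : (i : Fin d) → Fin (2 ^ s i) =>
      finCongr hUeq (BEaux.enc d (fun i => 2 ^ (a i + s i))
        (fun i => Fin.castLE (twoPowLe (a i) (s i)) (x i)))) := by
    intro x y hxy
    have h1 := (BEaux.enc d (fun i => 2 ^ (a i + s i))).injective
      ((finCongr hUeq).injective hxy)
    funext i
    exact Fin.castLE_injective _ (congrFun h1 i)
  obtain ⟨e, he⟩ := BEaux.exists_perm_comp _ _ hfinj hginj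
  have he' : ∀ x : (i : Fin d) → Fin (2 ^ s i),
      e (Fin.castLE (twoPowLe (∑ i, a i) (∑ i, s i))
          (finCongr hA (BEaux.enc d (fun i => 2 ^ s i) x)))
        = finCongr hUeq (BEaux.enc d (fun i => 2 ^ (a i + s i))
            (fun i => Fin.castLE (twoPowLe (a i) (s i)) (x i))) := he
  refine ⟨e.permMatrix ℂ, ⟨e, rfl⟩, ?_⟩
  intro U A hUA
  constructor
  · -- unitarity
    have hS := BEaux.permMatrix_mem_unitaryGroup (α := Fin (2 ^ ((∑ i, a i) + ∑ i, s i))) e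
    have hY := BEaux.castSq_unitary hUeq
      (BEaux.kronProd_unitary d (fun i => 2 ^ (a i + s i)) U fun i => (hUA i).1)
    have hSs : (e.permMatrix ℂ)ᴴ ∈ Matrix.unitaryGroup (Fin (2 ^ ((∑ i, a i) + ∑ i, s i))) ℂ := by
      rw [← Matrix.star_eq_conjTranspose]
      exact Unitary.star_mem hS
    exact mul_mem (mul_mem hS hY) hSs
  · -- norm bound
    have hlead : leadBlock (twoPowLe (∑ i, a i) (∑ i, s i))
        (e.permMatrix ℂ * castSq hUeq (kronProd d (fun i => 2 ^ (a i + s i)) U)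
          * (e.permMatrix ℂ)ᴴ)
        = castSq hA (kronProd d (fun i => 2 ^ s i)
            (fun i => leadBlock (twoPowLe (a i) (s i)) (U i))) := by
      ext i j
      obtain ⟨x, rfl⟩ := ((BEaux.enc d fun i => 2 ^ s i).trans (finCongr hA)).surjective i
      obtain ⟨y, rfl⟩ := ((BEaux.enc d fun i => 2 ^ s i).trans (finCongr hA)).surjective j
      simp only [Equiv.trans_apply]
      show (e.permMatrix ℂ * castSq hUeq (kronProd d (fun i => 2 ^ (a i + s i)) U)
          * (e.permMatrix ℂ)ᴴ)
          (Fin.castLE (twoPowLe (∑ i, a i) (∑ i, s i))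
            (finCongr hA (BEaux.enc d (fun i => 2 ^ s i) x)))
          (Fin.castLE (twoPowLe (∑ i, a i) (∑ i, s i))
            (finCongr hA (BEaux.enc d (fun i => 2 ^ s i) y)))
        = castSq hA (kronProd d (fun i => 2 ^ s i)
            (fun i => leadBlock (twoPowLe (a i) (s i)) (U i)))
          (finCongr hA (BEaux.enc d (fun i => 2 ^ s i) x))
          (finCongr hA (BEaux.enc d (fun i => 2 ^ s i) y))
      rw [BEaux.permMatrix_conj_apply, he' x, he' y, BEaux.castSq_apply,
        BEaux.kronProd_apply, BEaux.castSq_apply, BEaux.kronProd_apply]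
      rfl
    rw [hlead]
    have hcast : ((∏ i, α i : ℝ) : ℂ) = ∏ i, ((α i : ℝ) : ℂ) := by push_cast; rfl
    rw [BEaux.specNorm_eq_l2, hcast, ← BEaux.castSq_smul, ← BEaux.castSq_sub,
      BEaux.norm_castSq, ← BEaux.kronProd_smul]
    refine BEaux.kronProd_sub_bound d (fun i => 2 ^ s i) A
      (fun i => ((α i : ℝ) : ℂ) • leadBlock (twoPowLe (a i) (s i)) (U i)) ε α
      (fun i => (hUA i).2) (fun i => ?_) hα
    rw [norm_smul, Complex.norm_real, Real.norm_eq_abs, abs_of_nonneg (hα i)]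
    have hlb : ‖leadBlock (twoPowLe (a i) (s i)) (U i)‖ ≤ 1 := by
      have hsub : leadBlock (twoPowLe (a i) (s i)) (U i)
          = (U i).submatrix (Fin.castLE (twoPowLe (a i) (s i)))
              (Fin.castLE (twoPowLe (a i) (s i))) := rfl
      rw [hsub]
      exact le_trans
        (BEaux.l2_opNorm_submatrix_le (U i) _ _
          (Fin.castLE_injective _) (Fin.castLE_injective _))
        (BEaux.unitary_norm_le (hUA i).1)
    calc α i * ‖leadBlock (twoPowLe (a i) (s i)) (U i)‖ ≤ α i * 1 :=
        mul_le_mul_of_nonneg_left hlb (hα i)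
      _ = α i := mul_one _
end

section
/- Let m ≤ 2^b, let P and Q be 2^b × 2^b complex unitary matrices with p = P |0⟩^{⊗b} and q = Q |0⟩^{⊗b}, let n = a + s, and for each j ∈ {0, …, m−1} let U^{(j)} be a 2^n × 2^n complex unitary matrix with leading principal 2^s × 2^s block Ã^{(j)} = (⟨0|^{⊗a} ⊗ I_{2^s}) U^{(j)} (|0⟩^{⊗a} ⊗ I_{2^s}). Let W = Σ_{j=0}^{m−1} |j⟩⟨j| ⊗ U^{(j)} + Σ_{j=m}^{2^b−1} |j⟩⟨j| ⊗ I_{2^n} and U = (P† ⊗ I_{2^a} ⊗ I_{2^s}) W (Q ⊗ I_{2^a} ⊗ I_{2^s}). Then the leading principal 2^s × 2^s block of U satisfies (⟨0|^{⊗(a+b)} ⊗ I_{2^s}) U (|0⟩^{⊗(a+b)} ⊗ I_{2^s}) = Σ_{j=0}^{m−1} p_j^* q_j Ã^{(j)} + (Σ_{j=m}^{2^b−1} p_j^* q_j) I_{2^s}. -/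
open scoped Kronecker
open Matrix

/-- Zero-padding of a vector `y ∈ ℂ^m` to a vector in `ℂ^n`, `m ≤ n`. -/
noncomputable def pad {m n : ℕ} (h : m ≤ n) (y : Fin m → ℂ) : Fin n → ℂ :=
  fun j => if hj : (j : ℕ) < m then y ⟨j, hj⟩ else 0

/-- `(P, Q)` is a `(β, b, ε)`-state-preparation-pair for `y ∈ ℂ^m` (`m ≤ 2^b`):
`P` and `Q` are unitary and, with `p = P|0⟩` and `q = Q|0⟩` (the first columns of `P`
and `Q`), `∑ⱼ |β pⱼ* qⱼ − y̲ⱼ| ≤ ε` where `y̲` is the zero-padding of `y`. -/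
def IsStatePrepPair (b m : ℕ) (hm : m ≤ 2 ^ b) (β ε : ℝ) (y : Fin m → ℂ)
    (P Q : Matrix (Fin (2 ^ b)) (Fin (2 ^ b)) ℂ) : Prop :=
  P ∈ Matrix.unitaryGroup (Fin (2 ^ b)) ℂ ∧ Q ∈ Matrix.unitaryGroup (Fin (2 ^ b)) ℂ ∧
    ∑ j : Fin (2 ^ b),
      ‖(β : ℂ) * (starRingEnd ℂ (P j ⟨0, Nat.two_pow_pos b⟩)
        * Q j ⟨0, Nat.two_pow_pos b⟩) - pad hm y j‖ ≤ ε

/-- The select oracle `W = ∑_{j<m} |j⟩⟨j| ⊗ U⁽ʲ⁾ + ∑_{j≥m} |j⟩⟨j| ⊗ I`. -/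
noncomputable def selectOracle (b n m : ℕ) (hm : m ≤ 2 ^ b)
    (U : Fin m → Matrix (Fin (2 ^ n)) (Fin (2 ^ n)) ℂ) :
    Matrix (Fin (2 ^ b * 2 ^ n)) (Fin (2 ^ b * 2 ^ n)) ℂ :=
  ∑ j : Fin (2 ^ b),
    kron (Matrix.single j j 1) (if hj : (j : ℕ) < m then U ⟨j, hj⟩ else 1)


lemma kron_mul {N M : ℕ} (A C : Matrix (Fin N) (Fin N) ℂ) (B D : Matrix (Fin M) (Fin M) ℂ) :
    kron A B * kron C D = kron (A * C) (B * D) := by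
  simp only [kron, Matrix.reindex_apply, Matrix.submatrix_mul_equiv,
    Matrix.mul_kronecker_mul]

lemma kron_castLE {b a s : ℕ} (M : Matrix (Fin (2^b)) (Fin (2^b)) ℂ)
    (V : Matrix (Fin (2^(a+s))) (Fin (2^(a+s))) ℂ) (i j : Fin (2^s)) :
    kron M V
      (Fin.castLE (le_trans (twoPowLe a s) (Nat.le_mul_of_pos_left _ (Nat.two_pow_pos b))) i)
      (Fin.castLE (le_trans (twoPowLe a s) (Nat.le_mul_of_pos_left _ (Nat.two_pow_pos b))) j)
      = M ⟨0, Nat.two_pow_pos b⟩ ⟨0, Nat.two_pow_pos b⟩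
        * V (Fin.castLE (twoPowLe a s) i) (Fin.castLE (twoPowLe a s) j) := by
  have hlt : ∀ k : Fin (2^s), (k : ℕ) < 2^(a+s) := fun k => lt_of_lt_of_le k.2 (twoPowLe a s)
  simp only [kron, Matrix.reindex_apply, Matrix.submatrix_apply, finProdFinEquiv_symm_apply,
    Matrix.kroneckerMap_apply]
  congr 1
  · congr 1 <;> · ext; simp [Fin.divNat, Nat.div_eq_of_lt (hlt _)]
  · congr 1 <;> · ext; simp [Fin.modNat, Nat.mod_eq_of_lt (hlt _)]

lemma stdBasis_sandwich {b : ℕ} (P Q : Matrix (Fin (2^b)) (Fin (2^b)) ℂ) (j : Fin (2^b)) :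
    ((Pᴴ * Matrix.single j j 1 * Q : Matrix (Fin (2^b)) (Fin (2^b)) ℂ))
      ⟨0, Nat.two_pow_pos b⟩ ⟨0, Nat.two_pow_pos b⟩
      = starRingEnd ℂ (P j ⟨0, Nat.two_pow_pos b⟩) * Q j ⟨0, Nat.two_pow_pos b⟩ := by
  simp [Matrix.mul_apply, Matrix.single, Matrix.conjTranspose_apply, Finset.sum_ite_eq,
    ite_and]

lemma filter_lt_eq_map {b m : ℕ} (hm : m ≤ 2 ^ b) :
    Finset.univ.filter (fun j : Fin (2 ^ b) => (j : ℕ) < m)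
      = Finset.univ.map (Fin.castLEEmb hm) := by
  ext k
  simp only [Finset.mem_filter, Finset.mem_univ, true_and, Finset.mem_map,
    Fin.castLEEmb_apply]
  constructor
  · intro hk; exact ⟨⟨k, hk⟩, rfl⟩
  · rintro ⟨j, rfl⟩; exact j.2

/-- the leading block of
`U = (P† ⊗ I)(∑ⱼ |j⟩⟨j| ⊗ U⁽ʲ⁾ + ∑_{j≥m} |j⟩⟨j| ⊗ I)(Q ⊗ I)` equals
`∑_{j<m} pⱼ* qⱼ Ã⁽ʲ⁾ + (∑_{j≥m} pⱼ* qⱼ) I`, where `p = P|0⟩`, `q = Q|0⟩` and `Ã⁽ʲ⁾` is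
the leading block of `U⁽ʲ⁾`. -/
theorem lcu_leadBlock (b m a s : ℕ) (hm : m ≤ 2 ^ b)
    (P Q : Matrix (Fin (2 ^ b)) (Fin (2 ^ b)) ℂ)
    (hP : P ∈ Matrix.unitaryGroup (Fin (2 ^ b)) ℂ)
    (hQ : Q ∈ Matrix.unitaryGroup (Fin (2 ^ b)) ℂ)
    (U : Fin m → Matrix (Fin (2 ^ (a + s))) (Fin (2 ^ (a + s))) ℂ)
    (hU : ∀ j, U j ∈ Matrix.unitaryGroup (Fin (2 ^ (a + s))) ℂ) :
    leadBlock
      (le_trans (twoPowLe a s) (Nat.le_mul_of_pos_left _ (Nat.two_pow_pos b)))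
      (kron Pᴴ (1 : Matrix (Fin (2 ^ (a + s))) (Fin (2 ^ (a + s))) ℂ)
        * selectOracle b (a + s) m hm U
        * kron Q (1 : Matrix (Fin (2 ^ (a + s))) (Fin (2 ^ (a + s))) ℂ))
    = (∑ j : Fin m,
        (starRingEnd ℂ (P (Fin.castLE hm j) ⟨0, Nat.two_pow_pos b⟩)
          * Q (Fin.castLE hm j) ⟨0, Nat.two_pow_pos b⟩) • leadBlock (twoPowLe a s) (U j))
      + (∑ j ∈ Finset.univ.filter (fun j : Fin (2 ^ b) => m ≤ (j : ℕ)),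
          starRingEnd ℂ (P j ⟨0, Nat.two_pow_pos b⟩) * Q j ⟨0, Nat.two_pow_pos b⟩)
        • (1 : Matrix (Fin (2 ^ s)) (Fin (2 ^ s)) ℂ) := by
    classical
  have key : kron Pᴴ (1 : Matrix (Fin (2 ^ (a + s))) (Fin (2 ^ (a + s))) ℂ)
        * selectOracle b (a + s) m hm U
        * kron Q (1 : Matrix (Fin (2 ^ (a + s))) (Fin (2 ^ (a + s))) ℂ)
      = ∑ j : Fin (2 ^ b), kron (Pᴴ * Matrix.single j j 1 * Q)
          (if hj : (j : ℕ) < m then U ⟨j, hj⟩ else 1) := by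
    rw [selectOracle, Finset.mul_sum, Finset.sum_mul]
    refine Finset.sum_congr rfl fun j _ => ?_
    rw [kron_mul, kron_mul, one_mul, mul_one]
  rw [key]
  ext i k
  simp only [leadBlock, Matrix.of_apply, Matrix.sum_apply, Matrix.add_apply, Matrix.smul_apply,
    smul_eq_mul]
  have h1 : ∀ j' : Fin (2 ^ b), (kron (Pᴴ * Matrix.single j' j' 1 * Q)
      (if hj : (j' : ℕ) < m then U ⟨j', hj⟩ else 1))
        (Fin.castLE (le_trans (twoPowLe a s) (Nat.le_mul_of_pos_left _ (Nat.two_pow_pos b))) i)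
        (Fin.castLE (le_trans (twoPowLe a s) (Nat.le_mul_of_pos_left _ (Nat.two_pow_pos b))) k)
      = (starRingEnd ℂ (P j' ⟨0, Nat.two_pow_pos b⟩) * Q j' ⟨0, Nat.two_pow_pos b⟩)
        * (if hj : (j' : ℕ) < m then U ⟨j', hj⟩ else 1)
            (Fin.castLE (twoPowLe a s) i) (Fin.castLE (twoPowLe a s) k) := fun j' => by
    rw [kron_castLE, stdBasis_sandwich]
  rw [Finset.sum_congr rfl fun j' _ => h1 j',
    ← Finset.sum_filter_add_sum_filter_not Finset.univ (fun j' : Fin (2 ^ b) => (j' : ℕ) < m)]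
  congr 1
  · rw [filter_lt_eq_map hm, Finset.sum_map]
    refine Finset.sum_congr rfl fun j _ => ?_
    have hj : ((Fin.castLEEmb hm j : Fin (2 ^ b)) : ℕ) < m := j.2
    rw [dif_pos hj]
    rfl
  · rw [Finset.sum_mul]
    refine Finset.sum_congr (by simp [not_lt]) fun j hj => ?_
    simp only [Finset.mem_filter, Finset.mem_univ, true_and, not_lt] at hj
    rw [dif_neg (not_lt.2 hj)]
    simp [Matrix.one_apply, Fin.castLE_inj]
end
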